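/- Let q ≥ 2. The finitely presented abelian group with generators a₀, a₁, a₂ and relations aᵢ = q²·a_{i+1} and aᵢ = q²·a_{i-1} (indices mod 3) is isomorphic to ℤ/(q²−1)ℤ. -/
import Mathlib


/-- The finitely presented abelian group with generators `a₀, a₁, a₂` and relations
`aᵢ = q² a_{i+1}` and `aᵢ = q² a_{i+2}` (indices mod 3) is isomorphic to `ℤ/(q²−1)ℤ`. -/
theorem stmt0 (q : ℕ) (hq : 2 ≤ q) :
    Nonempty (((Fin 3 → ℤ) ⧸ AddSubgroup.closure
      {v : Fin 3 → ℤ | ∃ i : Fin 3,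
        v = Pi.single i 1 - (q : ℤ) ^ 2 • Pi.single (i + 1) 1 ∨
        v = Pi.single i 1 - (q : ℤ) ^ 2 • Pi.single (i + 2) 1}) ≃+ ZMod (q ^ 2 - 1)) := by
  classical
  set S : Set (Fin 3 → ℤ) :=
      {v : Fin 3 → ℤ | ∃ i : Fin 3,
        v = Pi.single i 1 - (q : ℤ) ^ 2 • Pi.single (i + 1) 1 ∨
        v = Pi.single i 1 - (q : ℤ) ^ 2 • Pi.single (i + 2) 1} with hS
  set H : AddSubgroup (Fin 3 → ℤ) := AddSubgroup.closure S with hH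
  have hq2 : 1 ≤ q ^ 2 := Nat.one_le_pow _ _ (by omega)
  have hone : ((q : ZMod (q ^ 2 - 1))) ^ 2 = 1 := by
    have h0 : ((q ^ 2 - 1 : ℕ) : ZMod (q ^ 2 - 1)) = 0 := ZMod.natCast_self _
    push_cast [Nat.cast_sub hq2] at h0
    linear_combination h0
  -- the hom
  let φ : (Fin 3 → ℤ) →+ ZMod (q ^ 2 - 1) :=
    AddMonoidHom.mk' (fun v => ((v 0 + v 1 + v 2 : ℤ) : ZMod (q ^ 2 - 1)))
      (by intro a b; push_cast [Pi.add_apply]; ring)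
  have hφval : ∀ v : Fin 3 → ℤ, φ v = ((v 0 + v 1 + v 2 : ℤ) : ZMod (q ^ 2 - 1)) := fun _ => rfl
  have hgen : ∀ v ∈ S, φ v = 0 := by
    rintro v ⟨i, h | h⟩ <;> subst h <;> fin_cases i <;>
      · rw [hφval]
        simp [Pi.single_apply, Fin.ext_iff]
        linear_combination -hone
  have hker : ∀ v ∈ H, φ v = 0 := by
    intro v hv
    have : H ≤ φ.ker := (AddSubgroup.closure_le _).mpr (fun x hx => hgen x hx)
    exact this hv
  let f : ((Fin 3 → ℤ) ⧸ H) →+ ZMod (q ^ 2 - 1) :=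
    QuotientAddGroup.lift H φ hker
  -- membership lemmas
  have e01 : (Pi.single 0 1 - Pi.single 1 1 : Fin 3 → ℤ) ∈ H := by
    have h1 : (Pi.single 0 1 - (q : ℤ) ^ 2 • Pi.single 2 1 : Fin 3 → ℤ) ∈ H :=
      AddSubgroup.subset_closure ⟨0, Or.inr rfl⟩
    have h2 : (Pi.single 1 1 - (q : ℤ) ^ 2 • Pi.single 2 1 : Fin 3 → ℤ) ∈ H :=
      AddSubgroup.subset_closure ⟨1, Or.inl rfl⟩
    have := sub_mem h1 h2
    convert this using 1
    ring
  have e02 : (Pi.single 0 1 - Pi.single 2 1 : Fin 3 → ℤ) ∈ H := by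
    have h1 : (Pi.single 0 1 - (q : ℤ) ^ 2 • Pi.single 1 1 : Fin 3 → ℤ) ∈ H :=
      AddSubgroup.subset_closure ⟨0, Or.inl rfl⟩
    have h2 : (Pi.single 2 1 - (q : ℤ) ^ 2 • Pi.single 1 1 : Fin 3 → ℤ) ∈ H := by
      have : ((2 : Fin 3) + 2) = 1 := by decide
      exact AddSubgroup.subset_closure ⟨2, Or.inr (by rw [this])⟩
    have := sub_mem h1 h2
    convert this using 1
    ring
  have ne0 : (((q : ℤ) ^ 2 - 1) • Pi.single 0 1 : Fin 3 → ℤ) ∈ H := by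
    have h1 : (Pi.single 0 1 - (q : ℤ) ^ 2 • Pi.single 1 1 : Fin 3 → ℤ) ∈ H :=
      AddSubgroup.subset_closure ⟨0, Or.inl rfl⟩
    have := sub_mem (AddSubgroup.zsmul_mem _ e01 ((q : ℤ) ^ 2)) h1
    convert this using 1
    module
  -- injectivity
  have hinj : Function.Injective f := by
    rw [injective_iff_map_eq_zero]
    intro x
    induction x using QuotientAddGroup.induction_on with
    | H v =>
      intro hv
      have hφv : φ v = 0 := hv
      rw [hφval] at hφv
      have hdvd : ((q ^ 2 - 1 : ℕ) : ℤ) ∣ (v 0 + v 1 + v 2) :=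
        (ZMod.intCast_zmod_eq_zero_iff_dvd _ _).mp hφv
      obtain ⟨k, hk⟩ := hdvd
      have hmem : v ∈ H := by
        have key : v = k • (((q : ℤ) ^ 2 - 1) • Pi.single 0 1)
            - (v 1) • ((Pi.single 0 1 : Fin 3 → ℤ) - Pi.single 1 1)
            - (v 2) • ((Pi.single 0 1 : Fin 3 → ℤ) - Pi.single 2 1) := by
          funext j
          have hcast : ((q ^ 2 - 1 : ℕ) : ℤ) = (q : ℤ) ^ 2 - 1 := by
            push_cast [Nat.cast_sub hq2]; ring
          rw [hcast] at hk
          fin_cases j <;>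
            simp [Pi.single_apply, Fin.ext_iff, smul_sub, smul_smul, mul_comm] <;>
            linarith [hk]
          
        rw [key]
        exact sub_mem (sub_mem (AddSubgroup.zsmul_mem _ ne0 k)
          (AddSubgroup.zsmul_mem _ e01 (v 1))) (AddSubgroup.zsmul_mem _ e02 (v 2))
      exact (QuotientAddGroup.eq_zero_iff v).mpr hmem
  -- surjectivity
  have hsurj : Function.Surjective f := by
    intro z
    obtain ⟨k, hk⟩ := ZMod.intCast_surjective (n := q ^ 2 - 1) z
    refine ⟨QuotientAddGroup.mk (k • Pi.single 0 1), ?_⟩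
    show φ (k • Pi.single 0 1) = z
    rw [hφval]
    simp [Pi.single_apply, hk]
  exact ⟨AddEquiv.ofBijective f ⟨hinj, hsurj⟩⟩
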